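/- Let (Φ_i) be a sequence of non-degenerate Orlicz functions and suppose the modular Φ̃(x) = ∑ᵢ Φ_i(x_i) has a strong minimum at 0 on ℓ_Φ, i.e., Φ̃(x^{(n)}) → 0 implies ‖x^{(n)}‖_Φ → 0. Then every x with Φ̃(x) < ∞ satisfies Φ̃(x/λ) < ∞ for all λ > 0 (i.e., ℓ_Φ = h_Φ). -/

import Mathlib

open Filter

/-- The Luxemburg norm associated to a Musielak–Orlicz function `Φ`. -/
noncomputable def luxemburgNorm (Φ : ℕ → ℝ → ℝ) (x : ℕ → ℝ) : ℝ :=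
  sInf {r : ℝ | 0 < r ∧ Summable (fun i => Φ i (x i / r)) ∧ ∑' i, Φ i (x i / r) ≤ 1}

/-- If the modular `Φ̃(x) = ∑ᵢ Φ_i(x_i)` has a strong minimum at `0` on `ℓ_Φ`,
then `ℓ_Φ = h_Φ`: every `x` with finite modular has finite modular after any
scaling `x/λ`, `λ > 0`. -/
theorem heart_eq_of_strong_minimum (Φ : ℕ → ℝ → ℝ)
    (heven : ∀ i, ∀ t : ℝ, Φ i (-t) = Φ i t)
    (hconv : ∀ i, ConvexOn ℝ Set.univ (Φ i))
    (hcont : ∀ i, Continuous (Φ i))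
    (h0 : ∀ i, Φ i 0 = 0)
    (hmono : ∀ i, MonotoneOn (Φ i) (Set.Ici (0:ℝ)))
    (hnondeg : ∀ i, ∀ t : ℝ, 0 < t → 0 < Φ i t)
    (hstrong : ∀ x : ℕ → ℕ → ℝ,
      (∀ n, ∃ r > (0:ℝ), Summable (fun i => Φ i (x n i / r))) →
      (∀ n, Summable (fun i => Φ i (x n i))) →
      Tendsto (fun n => ∑' i, Φ i (x n i)) atTop (nhds 0) →
      Tendsto (fun n => luxemburgNorm Φ (x n)) atTop (nhds 0)) :
    ∀ x : ℕ → ℝ, Summable (fun i => Φ i (x i)) →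
      ∀ lam : ℝ, 0 < lam → Summable (fun i => Φ i (x i / lam)) := by
  intro x hx lam hlam
  -- basic facts about Φ
  have habs : ∀ i (t : ℝ), Φ i t = Φ i |t| := by
    intro i t
    rcases le_or_gt 0 t with h | h
    · rw [abs_of_nonneg h]
    · rw [abs_of_neg h, heven]
  have hpos : ∀ i (t : ℝ), 0 ≤ Φ i t := by
    intro i t
    rw [habs i t]
    calc (0:ℝ) = Φ i 0 := (h0 i).symm
      _ ≤ Φ i |t| := hmono i (by simp) (abs_nonneg t) (abs_nonneg t)
  set f : ℕ → ℝ := fun i => Φ i (x i) with hf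
  set X : ℕ → ℕ → ℝ := fun n i => if n ≤ i then x i else 0 with hX
  have hXval : ∀ n i, Φ i (X n i) = if n ≤ i then f i else 0 := by
    intro n i
    by_cases h : n ≤ i <;> simp [hX, h, h0, hf]
  have hXsum : ∀ n, Summable (fun i => Φ i (X n i)) := by
    intro n
    refine Summable.of_nonneg_of_le (fun i => hpos i _) (fun i => ?_) hx
    rw [hXval]
    by_cases h : n ≤ i <;> simp [h, hpos, hf]
  have htail : ∀ n, (∑' i, Φ i (X n i)) = ∑' i, f (i + n) := by
    intro n
    have h1 := Summable.sum_add_tsum_nat_add (f := fun i => Φ i (X n i)) n (hXsum n)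
    have h2 : ∑ i ∈ Finset.range n, Φ i (X n i) = 0 := by
      apply Finset.sum_eq_zero
      intro i hi
      have hi' : i < n := Finset.mem_range.mp hi
      rw [hXval, if_neg (by omega)]
    have h3 : ∀ i, Φ (i + n) (X n (i + n)) = f (i + n) := by
      intro i; rw [hXval, if_pos (Nat.le_add_left n i)]
    rw [← h1, h2, zero_add]
    exact tsum_congr h3
  have htendsto : Tendsto (fun n => ∑' i, Φ i (X n i)) atTop (nhds 0) := by
    have := tendsto_sum_nat_add f
    refine this.congr fun n => ?_
    exact (htail n).symm
  have hnorm : Tendsto (fun n => luxemburgNorm Φ (X n)) atTop (nhds 0) := by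
    refine hstrong X (fun n => ⟨1, one_pos, ?_⟩) hXsum htendsto
    simpa using hXsum n
  -- pick N with norm < lam and tail modular ≤ 1
  have hev : ∀ᶠ n in atTop,
      luxemburgNorm Φ (X n) < lam ∧ (∑' i, Φ i (X n i)) < 1 :=
    (hnorm.eventually_lt_const hlam).and (htendsto.eventually_lt_const one_pos)
  obtain ⟨N, hN1, hN2⟩ := hev.exists
  set S : Set ℝ :=
    {r : ℝ | 0 < r ∧ Summable (fun i => Φ i (X N i / r)) ∧ ∑' i, Φ i (X N i / r) ≤ 1}
    with hS
  have h1S : (1:ℝ) ∈ S := by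
    refine ⟨one_pos, by simpa using hXsum N, ?_⟩
    simpa using hN2.le
  have hbdd : BddBelow S := ⟨0, fun r hr => hr.1.le⟩
  have hInf : sInf S < lam := hN1
  obtain ⟨r, hrS, hrlam⟩ := (csInf_lt_iff hbdd ⟨1, h1S⟩).1 hInf
  obtain ⟨hr0, hrsum, -⟩ := hrS
  -- comparison: Φ i (x i / lam) ≤ Φ i (x i / r)
  have key : ∀ i, Φ i (x i / lam) ≤ Φ i (x i / r) := by
    intro i
    rw [habs i (x i / lam), habs i (x i / r), abs_div, abs_div,
      abs_of_pos hlam, abs_of_pos hr0]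
    exact hmono i (div_nonneg (abs_nonneg _) hlam.le)
      (div_nonneg (abs_nonneg _) hr0.le)
      (by gcongr)
  rw [← summable_nat_add_iff N]
  refine Summable.of_nonneg_of_le (fun i => hpos _ _) (fun i => ?_)
    ((summable_nat_add_iff N).2 hrsum)
  have hXN : X N (i + N) = x (i + N) := if_pos (Nat.le_add_left N i)
  rw [hXN]
  exact key (i + N)
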